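/- arXiv:math/9309206 — 3 statements merged into one kernel-verified Lean document; each statement's English description precedes it below -/
import Mathlib

section
/- With g, (kₙ), and (A_α) as specified, each set B_α = { f ∈ ∏ₙ g(n) : ∀ n ∈ A_α, f(kₙ) = (g(kₙ)−1)/2 } maps under the canonical identification to a strongly symmetrically porous subset of [0,1]. -/
open Set Filter

/-- λ(A,(a,b)): supremum of lengths of open subintervals of (a,b) disjoint from A. -/
noncomputable def lamGap (A : Set ℝ) (a b : ℝ) : ℝ :=
  sSup {l : ℝ | 0 ≤ l ∧ ∃ c, a ≤ c ∧ c + l ≤ b ∧ Set.Ioo c (c + l) ∩ A = ∅}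

/-- λ*(A,(c,d)): supremum of δ ≥ 0 such that (c,c+δ) ∪ (d−δ,d) is disjoint from A. -/
noncomputable def lamSym (A : Set ℝ) (c d : ℝ) : ℝ :=
  sSup {δ : ℝ | 0 ≤ δ ∧ (Set.Ioo c (c + δ) ∪ Set.Ioo (d - δ) d) ∩ A = ∅}

/-- porosity p(A,r) -/
noncomputable def por (A : Set ℝ) (r : ℝ) : ℝ :=
  Filter.limsup (fun ε => lamGap A (r - ε) (r + ε) / ε) (nhdsWithin 0 (Set.Ioi 0))

/-- symmetric porosity s(A,r) -/
noncomputable def spor (A : Set ℝ) (r : ℝ) : ℝ :=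
  Filter.limsup (fun ε => lamSym A (r - ε) (r + ε) / ε) (nhdsWithin 0 (Set.Ioi 0))

def Porous (A : Set ℝ) : Prop := ∀ a ∈ A, 0 < por A a
def StronglyPorous (A : Set ℝ) : Prop := ∀ a ∈ A, por A a = 1
def SymPorous (A : Set ℝ) : Prop := ∀ a ∈ A, 0 < spor A a
def StronglySymPorous (A : Set ℝ) : Prop := ∀ a ∈ A, spor A a = 1

/-- The σ-ideal on [0,1] generated by the sets (⊆ [0,1]) satisfying P. -/
def sigmaIdeal (P : Set ℝ → Prop) : Set (Set ℝ) :=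
  {A | A ⊆ Set.Icc 0 1 ∧
    ∃ f : ℕ → Set ℝ, (∀ n, P (f n) ∧ f n ⊆ Set.Icc 0 1) ∧ A ⊆ ⋃ n, f n}

/-- The identification X → [0,1] determined by singleton weights w n j = μₙ({j}):
the basic clopen set [σ] maps to an interval of length ∏_{n<|σ|} w n (σ n). -/
noncomputable def weightMap (w : ℕ → ℕ → ℝ) (f : ℕ → ℕ) : ℝ :=
  ∑' n, (∏ k ∈ Finset.range n, w k (f k)) * (∑ j ∈ Finset.range (f n), w n j)

namespace BSP

variable (w : ℕ → ℕ → ℝ)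

/-- partial sum of weights at level n -/
noncomputable def Sw (n j : ℕ) : ℝ := ∑ i ∈ Finset.range j, w n i

/-- product of chosen weights below N -/
noncomputable def Pr (f : ℕ → ℕ) (N : ℕ) : ℝ := ∏ p ∈ Finset.range N, w p (f p)

/-- left endpoint of the level-N cylinder containing f -/
noncomputable def Pt (f : ℕ → ℕ) (N : ℕ) : ℝ :=
  ∑ n ∈ Finset.range N, Pr w f n * Sw w n (f n)

variable {g : ℕ → ℕ}
variable (hwpos : ∀ n j, j < g n → 0 < w n j)
variable (hwsum : ∀ n, ∑ j ∈ Finset.range (g n), w n j = 1)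

section basic
include hwpos

lemma w_nonneg {n j : ℕ} (h : j < g n) : 0 ≤ w n j := (hwpos n j h).le

lemma Sw_nonneg {n j : ℕ} (h : j ≤ g n) : 0 ≤ Sw w n j :=
  Finset.sum_nonneg fun i hi => (hwpos n i (lt_of_lt_of_le (Finset.mem_range.1 hi) h)).le

lemma Sw_mono {n j j' : ℕ} (h : j ≤ j') (h' : j' ≤ g n) : Sw w n j ≤ Sw w n j' :=
  Finset.sum_le_sum_of_subset_of_nonneg (Finset.range_subset_range.2 h)
    (fun i hi _ => (hwpos n i (lt_of_lt_of_le (Finset.mem_range.1 hi) h')).le)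

include hwsum

lemma Sw_le_one {n j : ℕ} (h : j ≤ g n) : Sw w n j ≤ 1 := by
  have h1 := Sw_mono w hwpos h le_rfl
  have h2 : Sw w n (g n) = 1 := hwsum n
  linarith

lemma w_le_one {n j : ℕ} (h : j < g n) : w n j ≤ 1 := by
  have := Finset.single_le_sum (f := w n)
    (fun i hi => (hwpos n i (Finset.mem_range.1 hi)).le) (Finset.mem_range.2 h)
  rwa [hwsum n] at this

end basic

lemma Pr_zero (f : ℕ → ℕ) : Pr w f 0 = 1 := by simp [Pr]
lemma Pt_zero (f : ℕ → ℕ) : Pt w f 0 = 0 := by simp [Pt]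

lemma Pr_succ (f : ℕ → ℕ) (N : ℕ) : Pr w f (N + 1) = Pr w f N * w N (f N) :=
  Finset.prod_range_succ _ _

lemma Pt_succ (f : ℕ → ℕ) (N : ℕ) :
    Pt w f (N + 1) = Pt w f N + Pr w f N * Sw w N (f N) :=
  Finset.sum_range_succ _ _

lemma Sw_succ (n j : ℕ) : Sw w n (j + 1) = Sw w n j + w n j :=
  Finset.sum_range_succ _ _

include hwpos

lemma Pr_pos {f : ℕ → ℕ} (hf : ∀ p, f p < g p) (N : ℕ) : 0 < Pr w f N :=
  Finset.prod_pos fun p _ => hwpos p (f p) (hf p)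

lemma term_nonneg {f : ℕ → ℕ} (hf : ∀ p, f p < g p) (n : ℕ) :
    0 ≤ Pr w f n * Sw w n (f n) :=
  mul_nonneg (Pr_pos w hwpos hf n).le (Sw_nonneg w hwpos (hf n).le)

lemma Pt_mono {f : ℕ → ℕ} (hf : ∀ p, f p < g p) {N M : ℕ} (h : N ≤ M) :
    Pt w f N ≤ Pt w f M :=
  Finset.sum_le_sum_of_subset_of_nonneg (Finset.range_subset_range.2 h)
    (fun n _ _ => term_nonneg w hwpos hf n)

include hwsum

lemma R_antitone {f : ℕ → ℕ} (hf : ∀ p, f p < g p) {N M : ℕ} (h : N ≤ M) :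
    Pt w f M + Pr w f M ≤ Pt w f N + Pr w f N := by
  induction M, h using Nat.le_induction with
  | base => exact le_rfl
  | succ M hNM ih =>
    refine le_trans ?_ ih
    rw [Pt_succ, Pr_succ]
    have h1 : Sw w M (f M) + w M (f M) = Sw w M (f M + 1) := (Sw_succ w M (f M)).symm
    have h2 : Sw w M (f M + 1) ≤ 1 := Sw_le_one w hwpos hwsum (hf M)
    have h3 : 0 ≤ Pr w f M := (Pr_pos w hwpos hf M).le
    nlinarith [Sw_nonneg w hwpos (hf M).le]

lemma summable_terms {f : ℕ → ℕ} (hf : ∀ p, f p < g p) :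
    Summable (fun n => Pr w f n * Sw w n (f n)) := by
  refine summable_of_sum_range_le (term_nonneg w hwpos hf) (fun M => ?_) (c := 1)
  have h1 : Pt w f M + Pr w f M ≤ Pt w f 0 + Pr w f 0 :=
    R_antitone w hwpos hwsum hf (Nat.zero_le M)
  have h2 : 0 ≤ Pr w f M := (Pr_pos w hwpos hf M).le
  rw [Pt_zero, Pr_zero] at h1
  calc (∑ n ∈ Finset.range M, Pr w f n * Sw w n (f n)) = Pt w f M := rfl
    _ ≤ 1 := by linarith

omit hwpos hwsum in
lemma map_eq (f : ℕ → ℕ) : weightMap w f = ∑' n, Pr w f n * Sw w n (f n) := rfl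

lemma Pt_le_map {f : ℕ → ℕ} (hf : ∀ p, f p < g p) (N : ℕ) :
    Pt w f N ≤ weightMap w f := by
  rw [map_eq]
  exact Summable.sum_le_tsum (Finset.range N) (fun n _ => term_nonneg w hwpos hf n)
    (summable_terms w hwpos hwsum hf)

lemma map_le_R {f : ℕ → ℕ} (hf : ∀ p, f p < g p) (N : ℕ) :
    weightMap w f ≤ Pt w f N + Pr w f N := by
  rw [map_eq]
  refine Summable.tsum_le_of_sum_range_le (summable_terms w hwpos hwsum hf) (fun M => ?_)
  show Pt w f M ≤ _
  rcases le_total M N with h | h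
  · have := Pt_mono w hwpos hf h
    have h2 : 0 ≤ Pr w f N := (Pr_pos w hwpos hf N).le
    linarith
  · have := R_antitone w hwpos hwsum hf h
    have h2 : 0 ≤ Pr w f M := (Pr_pos w hwpos hf M).le
    linarith

end BSP

namespace BSP

variable (w : ℕ → ℕ → ℝ)
variable {g : ℕ → ℕ}
variable (hwpos : ∀ n j, j < g n → 0 < w n j)
variable (hwsum : ∀ n, ∑ j ∈ Finset.range (g n), w n j = 1)

lemma Pr_congr {f f' : ℕ → ℕ} {N : ℕ} (h : ∀ p < N, f' p = f p) :
    Pr w f' N = Pr w f N :=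
  Finset.prod_congr rfl fun p hp => by rw [h p (Finset.mem_range.1 hp)]

lemma Pt_congr {f f' : ℕ → ℕ} {N : ℕ} (h : ∀ p < N, f' p = f p) :
    Pt w f' N = Pt w f N := by
  refine Finset.sum_congr rfl fun n hn => ?_
  have hn' := Finset.mem_range.1 hn
  rw [Pr_congr w (fun p hp => h p (hp.trans hn')), h n hn']

include hwpos hwsum in
lemma trichotomy {f f' : ℕ → ℕ} (hf : ∀ p, f p < g p) (hf' : ∀ p, f' p < g p) (N : ℕ) :
    (∀ p < N, f' p = f p) ∨ weightMap w f' ≤ Pt w f N ∨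
      Pt w f N + Pr w f N ≤ weightMap w f' := by
  induction N with
  | zero => left; omega
  | succ N ih =>
    rcases ih with h | h | h
    · rcases lt_trichotomy (f' N) (f N) with hlt | heq | hgt
      · right; left
        have e1 : Pt w f' N = Pt w f N := Pt_congr w h
        have e2 : Pr w f' N = Pr w f N := Pr_congr w h
        have hPr : 0 ≤ Pr w f N := (Pr_pos w hwpos hf N).le
        have hmono : Sw w N (f' N + 1) ≤ Sw w N (f N) :=
          Sw_mono w hwpos hlt (hf N).le
        calc weightMap w f' ≤ Pt w f' (N + 1) + Pr w f' (N + 1) :=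
              map_le_R w hwpos hwsum hf' (N + 1)
          _ = Pt w f N + Pr w f N * Sw w N (f' N + 1) := by
              rw [Pt_succ, Pr_succ, e1, e2, Sw_succ]; ring
          _ ≤ Pt w f N + Pr w f N * Sw w N (f N) := by nlinarith
          _ = Pt w f (N + 1) := (Pt_succ w f N).symm
      · left; intro p hp
        rcases Nat.lt_succ_iff_lt_or_eq.1 hp with h' | h'
        · exact h p h'
        · rw [h']; exact heq
      · right; right
        have e1 : Pt w f' N = Pt w f N := Pt_congr w h
        have e2 : Pr w f' N = Pr w f N := Pr_congr w h
        have hPr : 0 ≤ Pr w f N := (Pr_pos w hwpos hf N).le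
        have hmono : Sw w N (f N + 1) ≤ Sw w N (f' N) :=
          Sw_mono w hwpos hgt (hf' N).le
        calc Pt w f (N + 1) + Pr w f (N + 1)
            = Pt w f N + Pr w f N * Sw w N (f N + 1) := by
              rw [Pt_succ, Pr_succ, Sw_succ]; ring
          _ ≤ Pt w f N + Pr w f N * Sw w N (f' N) := by nlinarith
          _ = Pt w f' (N + 1) := by rw [Pt_succ, e1, e2]
          _ ≤ weightMap w f' := Pt_le_map w hwpos hwsum hf' (N + 1)
    · right; left
      exact h.trans (Pt_mono w hwpos hf (Nat.le_succ N))
    · right; right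
      exact (R_antitone w hwpos hwsum hf (Nat.le_succ N)).trans h

end BSP

namespace BSP

variable (w : ℕ → ℕ → ℝ) {g m ℓ : ℕ → ℕ}
variable (hwpos : ∀ n j, j < g n → 0 < w n j)
variable (hwsum : ∀ n, ∑ j ∈ Finset.range (g n), w n j = 1)
variable (hgodd : ∀ n, Odd (g n)) (hg3 : ∀ n, 3 ≤ g n) (hmg : ∀ n, 2 * m n < g n)
variable (hwmid : ∀ n i j, m n ≤ i → i ≤ j → j ≤ g n - m n - 1 → w n i = w n j)
variable (hwend : ∀ n i, i < m n →
      w n i = w n (g n - i - 1) ∧ w n i = w n (i + 1) / (ℓ n : ℝ))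

include hmg hwmid hwend in
lemma wsym (n : ℕ) {i : ℕ} (hi : i < g n) : w n i = w n (g n - 1 - i) := by
  have hmgn := hmg n
  by_cases h1 : i < m n
  · have := (hwend n i h1).1
    have e : g n - i - 1 = g n - 1 - i := by omega
    rwa [e] at this
  · by_cases h2 : g n - 1 - i < m n
    · have := (hwend n (g n - 1 - i) h2).1
      have e : g n - (g n - 1 - i) - 1 = i := by omega
      rw [e] at this
      exact this.symm
    · push_neg at h1 h2
      rcases le_total i (g n - 1 - i) with h | h
      · exact hwmid n i (g n - 1 - i) h1 h (by omega)
      · exact (hwmid n (g n - 1 - i) i h2 h (by omega)).symm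

include hwsum hmg hwmid hwend hgodd in
lemma Sw_mid (n : ℕ) :
    2 * Sw w n ((g n - 1) / 2) + w n ((g n - 1) / 2) = 1 := by
  obtain ⟨t, ht⟩ := hgodd n
  have hmid : (g n - 1) / 2 = t := by omega
  rw [hmid]
  have hsum := hwsum n
  have hsplit : ∑ j ∈ Finset.range (g n), w n j
      = (∑ j ∈ Finset.range t, w n j) + w n t
        + ∑ j ∈ Finset.Ico (t + 1) (g n), w n j := by
    rw [Finset.range_eq_Ico, ← Finset.sum_Ico_consecutive (w n) (Nat.zero_le (t+1)) (by omega),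
      ← Finset.range_eq_Ico, Finset.sum_range_succ]
  have hrefl : ∑ j ∈ Finset.Ico (t + 1) (g n), w n j = ∑ j ∈ Finset.range t, w n j := by
    rw [Finset.sum_Ico_eq_sum_range]
    have hcount : g n - (t + 1) = t := by omega
    rw [hcount]
    have step1 : ∀ j ∈ Finset.range t, w n (t + 1 + j) = w n (t - 1 - j) := by
      intro j hj
      have hj' := Finset.mem_range.1 hj
      have h1 : t + 1 + j < g n := by omega
      have := wsym w hmg hwmid hwend n h1
      have e : g n - 1 - (t + 1 + j) = t - 1 - j := by omega
      rwa [e] at this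
    rw [Finset.sum_congr rfl step1]
    exact Finset.sum_range_reflect (fun j => w n j) t
  rw [hsplit, hrefl] at hsum
  show 2 * (∑ j ∈ Finset.range t, w n j) + w n t = 1
  linarith

include hwpos hwsum hmg hwmid in
lemma mid_bound (n : ℕ) :
    ((g n - 2 * m n : ℕ) : ℝ) * w n ((g n - 1) / 2) ≤ 1 := by
  have hmgn := hmg n
  set mid := (g n - 1) / 2 with hmiddef
  have hmid1 : m n ≤ mid := by omega
  have hmid2 : mid ≤ g n - m n - 1 := by omega
  have heach : ∀ i ∈ Finset.Ico (m n) (g n - m n), w n i = w n mid := by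
    intro i hi
    obtain ⟨hi1, hi2⟩ := Finset.mem_Ico.1 hi
    rcases le_total i mid with h | h
    · exact hwmid n i mid hi1 h hmid2
    · exact (hwmid n mid i hmid1 h (by omega)).symm
  have hsub : ∑ i ∈ Finset.Ico (m n) (g n - m n), w n i
      ≤ ∑ i ∈ Finset.range (g n), w n i := by
    refine Finset.sum_le_sum_of_subset_of_nonneg ?_
      (fun i hi _ => (hwpos n i (Finset.mem_range.1 hi)).le)
    intro i hi
    obtain ⟨hi1, hi2⟩ := Finset.mem_Ico.1 hi
    exact Finset.mem_range.2 (by omega)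
  rw [Finset.sum_congr rfl heach, Finset.sum_const, Nat.card_Ico, hwsum n,
    nsmul_eq_mul] at hsub
  have e : g n - m n - m n = g n - 2 * m n := by omega
  rwa [e] at hsub

include hwpos hwsum in
lemma Pr_le_single {f : ℕ → ℕ} (hf : ∀ p, f p < g p) {q N : ℕ} (hq : q < N) :
    Pr w f N ≤ w q (f q) := by
  have hmem : q ∈ Finset.range N := Finset.mem_range.2 hq
  rw [Pr, ← Finset.mul_prod_erase (Finset.range N) (fun p => w p (f p)) hmem]
  have h1 : ∏ p ∈ (Finset.range N).erase q, w p (f p) ≤ 1 :=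
    Finset.prod_le_one (fun p _ => (hwpos p (f p) (hf p)).le)
      (fun p _ => w_le_one w hwpos hwsum (hf p))
  nlinarith [hwpos q (f q) (hf q),
    Finset.prod_nonneg (fun p (_ : p ∈ (Finset.range N).erase q) => (hwpos p (f p) (hf p)).le)]

end BSP

namespace BSP

/-- the defining set for `lamSym` in the symmetric-interval case -/
def lamset (A : Set ℝ) (c d : ℝ) : Set ℝ :=
  {δ : ℝ | 0 ≤ δ ∧ (Set.Ioo c (c + δ) ∪ Set.Ioo (d - δ) d) ∩ A = ∅}

lemma lamSym_eq_sSup (A : Set ℝ) (c d : ℝ) : lamSym A c d = sSup (lamset A c d) := rfl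

lemma zero_mem_lamset (A : Set ℝ) (c d : ℝ) : (0 : ℝ) ∈ lamset A c d := by
  refine ⟨le_rfl, ?_⟩
  simp [Set.Ioo_self]

lemma lamset_subset {A : Set ℝ} {r ε : ℝ} (hr : r ∈ A) (hε : 0 < ε) :
    ∀ δ ∈ lamset A (r - ε) (r + ε), δ ≤ ε := by
  intro δ ⟨hδ0, hδ⟩
  by_contra h
  push_neg at h
  have hmem : r ∈ (Set.Ioo (r - ε) (r - ε + δ) ∪ Set.Ioo (r + ε - δ) (r + ε)) ∩ A := by
    refine ⟨Or.inl ⟨by linarith, by linarith⟩, hr⟩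
  rw [hδ] at hmem
  exact hmem

lemma lamSym_nonneg {A : Set ℝ} {r ε : ℝ} (hr : r ∈ A) (hε : 0 < ε) :
    0 ≤ lamSym A (r - ε) (r + ε) :=
  le_csSup ⟨ε, lamset_subset hr hε⟩ (zero_mem_lamset A _ _)

lemma lamSym_le {A : Set ℝ} {r ε : ℝ} (hr : r ∈ A) (hε : 0 < ε) :
    lamSym A (r - ε) (r + ε) ≤ ε :=
  csSup_le ⟨0, zero_mem_lamset A _ _⟩ (lamset_subset hr hε)

lemma le_lamSym {A : Set ℝ} {r ε δ : ℝ} (hr : r ∈ A) (hε : 0 < ε)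
    (hδ : δ ∈ lamset A (r - ε) (r + ε)) : δ ≤ lamSym A (r - ε) (r + ε) :=
  le_csSup ⟨ε, lamset_subset hr hε⟩ hδ

lemma nat_pow_bound : ∀ q : ℕ, 1 ≤ q → 4 * q ≤ 2 ^ (q + 1) := by
  intro q hq
  induction q with
  | zero => omega
  | succ q ih =>
    rcases Nat.eq_or_lt_of_le hq with h | h
    · simp [← h]
    · have h1 : 1 ≤ q := by omega
      have h0 := ih h1
      have h2 : 2 ^ (q + 1 + 1) = 2 ^ (q + 1) * 2 := pow_succ 2 (q + 1)
      omega

end BSP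

namespace BSP

lemma final_step {B' : Set ℝ} {x₀ P0 L s c u η : ℝ}
    (hx₀B : x₀ ∈ B')
    (hJ2 : x₀ ≤ P0 + L)
    (hI1 : P0 + L * s ≤ x₀) (hI2 : x₀ ≤ P0 + L * s + L * c)
    (hLpos : 0 < L) (hcpos : 0 < c) (hseq : 2 * s + c = 1)
    (hc6 : 6 * c ≤ 1) (hcη : 4 * c ≤ η)
    (hLu : L < 2 * u)
    (htri : ∀ x ∈ B',
      (P0 + L * s ≤ x ∧ x ≤ P0 + L * s + L * c) ∨ x ≤ P0 ∨ P0 + L ≤ x) :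
    ∃ ε : ℝ, ε ∈ Set.Ioo (0 : ℝ) u ∧ 1 - η ≤ lamSym B' (x₀ - ε) (x₀ + ε) / ε := by
  have hs512 : 5 / 12 ≤ s := by linarith
  set ε := min (x₀ - P0) (P0 + L - x₀) with hεdef
  have hε1 : ε ≤ x₀ - P0 := min_le_left _ _
  have hε2 : ε ≤ P0 + L - x₀ := min_le_right _ _
  have hεs : L * s ≤ ε := by
    refine le_min (by linarith) (by nlinarith)
  have hεpos : 0 < ε := lt_of_lt_of_le (by nlinarith) hεs
  have hεle : 2 * ε ≤ L := by linarith
  have hεu : ε < u := by linarith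
  set δ := ε - L * c with hδdef
  have hδ0 : 0 ≤ δ := by nlinarith
  have hmem : δ ∈ lamset B' (x₀ - ε) (x₀ + ε) := by
    refine ⟨hδ0, Set.eq_empty_iff_forall_notMem.2 ?_⟩
    rintro x ⟨hxU, hxB⟩
    have hLc : 0 < L * c := mul_pos hLpos hcpos
    rcases hxU with hx | hx <;> obtain ⟨hxa, hxb⟩ := hx <;>
      rcases htri x hxB with ⟨h1, h2⟩ | h | h <;> simp only [hδdef] at hxa hxb <;> linarith
  have hlam : δ ≤ lamSym B' (x₀ - ε) (x₀ + ε) := le_lamSym hx₀B hεpos hmem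
  refine ⟨ε, ⟨hεpos, hεu⟩, ?_⟩
  have hratio : 1 - η ≤ δ / ε := by
    rw [le_div_iff₀ hεpos]
    have h1 : 0 ≤ η - 4 * c := by linarith
    have h2 : 0 ≤ ε - L * s := by linarith
    nlinarith [mul_nonneg h1 h2, mul_pos hLpos hcpos, mul_nonneg h1 (mul_nonneg hLpos.le (le_trans (by norm_num) hs512 : (0:ℝ) ≤ s))]
  refine hratio.trans ?_
  gcongr

end BSP


set_option maxHeartbeats 1000000 in
/-- each B_α maps to a strongly symmetrically porous subset of [0,1]. -/
theorem B_alpha_strongly_sym_porous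
    (g m ℓ k : ℕ → ℕ) (w : ℕ → ℕ → ℝ) (A : Set ℕ)
    (hg : StrictMono g) (hgodd : ∀ n, Odd (g n)) (hg3 : ∀ n, 3 ≤ g n)
    (hm : StrictMono m) (hℓ : StrictMono ℓ) (hℓ2 : ∀ n, 2 ≤ ℓ n)
    (hmg : ∀ n, 2 * m n < g n)
    (hlim1 : Filter.Tendsto (fun n => (ℓ n : ℝ) ^ (m n) / (g n : ℝ))
      Filter.atTop (nhds 0))
    (hlim2 : Filter.Tendsto (fun n => (ℓ n : ℝ) / (ℓ (n + 1) : ℝ))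
      Filter.atTop (nhds 0))
    -- w n is the singleton-weight function of the measure μₙ:
    (hwpos : ∀ n j, j < g n → 0 < w n j)
    (hwsum : ∀ n, ∑ j ∈ Finset.range (g n), w n j = 1)
    (hwmid : ∀ n i j, m n ≤ i → i ≤ j → j ≤ g n - m n - 1 → w n i = w n j)
    (hwend : ∀ n i, i < m n →
      w n i = w n (g n - i - 1) ∧ w n i = w n (i + 1) / (ℓ n : ℝ))
    (hk : StrictMono k) (hk10 : ∀ n, 10 ≤ k (n + 1) - k n)
    (hA : A.Infinite) :
    StronglySymPorous (weightMap w ''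
      {f : ℕ → ℕ | (∀ n, f n < g n) ∧
        ∀ n ∈ A, f (k n) = (g (k n) - 1) / 2}) := by
  classical
  -- eventual lower bound on g p - 2 m p
  have hev : ∀ᶠ p in Filter.atTop, (ℓ p : ℝ) ^ m p / (g p : ℝ) < 1 / 2 :=
    hlim1.eventually_lt_const (by norm_num)
  obtain ⟨P₀, hP₀⟩ := Filter.eventually_atTop.1 hev
  set P₁ := max P₀ 1 with hP₁def
  have hgap : ∀ p, P₁ ≤ p → 2 * p ≤ g p - 2 * m p := by
    intro p hp
    have hp0 := hP₀ p (le_trans (le_max_left _ _) hp)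
    have hgpos : (0 : ℝ) < (g p : ℝ) := by
      have := hg3 p; positivity
    have h2 : 2 * ℓ p ^ m p ≤ g p := by
      rw [div_lt_iff₀ hgpos] at hp0
      have hc : ((2 * ℓ p ^ m p : ℕ) : ℝ) ≤ (g p : ℝ) := by push_cast; linarith
      exact_mod_cast hc
    have h3 : 2 ^ m p ≤ ℓ p ^ m p := Nat.pow_le_pow_left (hℓ2 p) _
    have h4 : p ≤ m p := hm.le_apply
    have h5 : 1 ≤ m p := le_trans (le_trans (le_max_right P₀ 1) hp) h4
    have h6 := BSP.nat_pow_bound (m p) h5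
    have h7 : 2 ^ (m p + 1) = 2 ^ m p * 2 := pow_succ 2 (m p)
    omega
  have hcbound : ∀ p, P₁ ≤ p → w p ((g p - 1) / 2) * (2 * (p : ℝ)) ≤ 1 := by
    intro p hp
    have h1 := BSP.mid_bound w hwpos hwsum hmg hwmid p
    have h2 := hgap p hp
    have hcpos := hwpos p ((g p - 1) / 2) (by have := hg3 p; omega)
    have h3 : ((2 * p : ℕ) : ℝ) ≤ ((g p - 2 * m p : ℕ) : ℝ) := by exact_mod_cast h2
    push_cast at h3
    nlinarith
  intro a ha
  obtain ⟨f, hfmem, rfl⟩ := ha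
  have hfg : ∀ n, f n < g n := hfmem.1
  have hfA : ∀ n ∈ A, f (k n) = (g (k n) - 1) / 2 := hfmem.2
  have haB : weightMap w f ∈ weightMap w ''
      {f : ℕ → ℕ | (∀ n, f n < g n) ∧
        ∀ n ∈ A, f (k n) = (g (k n) - 1) / 2} := ⟨f, hfmem, rfl⟩
  unfold spor
  set B' : Set ℝ := weightMap w ''
      {f : ℕ → ℕ | (∀ n, f n < g n) ∧
        ∀ n ∈ A, f (k n) = (g (k n) - 1) / 2} with hB'def
  set x₀ : ℝ := weightMap w f with hx₀def
  set l : Filter ℝ := nhdsWithin 0 (Set.Ioi 0) with hldef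
  set F : ℝ → ℝ := fun ε => lamSym B' (x₀ - ε) (x₀ + ε) / ε with hFdef
  have hub : ∀ᶠ ε in l, F ε ≤ 1 := by
    refine eventually_nhdsWithin_of_forall (fun ε hε => ?_)
    have hε' : (0 : ℝ) < ε := hε
    exact div_le_one_of_le₀ (BSP.lamSym_le haB hε') hε'.le
  have hlb : ∀ᶠ ε in l, 0 ≤ F ε := by
    refine eventually_nhdsWithin_of_forall (fun ε hε => ?_)
    have hε' : (0 : ℝ) < ε := hε
    exact div_nonneg (BSP.lamSym_nonneg haB hε') hε'.le
  have h1 : Filter.limsup F l ≤ 1 :=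
    Filter.limsup_le_of_le (Filter.isCoboundedUnder_le_of_eventually_le l hlb) hub
  -- the frequently estimate
  have key : ∀ η : ℝ, 0 < η → η ≤ 1 → ∃ᶠ ε in l, 1 - η ≤ F ε := by
    intro η hη0 hη1
    rw [Filter.frequently_iff]
    intro U hU
    obtain ⟨u, hu, hsub⟩ := mem_nhdsGT_iff_exists_Ioo_subset.1 hU
    have hu0 : (0 : ℝ) < u := hu
    obtain ⟨T, hT⟩ := exists_nat_gt (1 / (4 * u))
    obtain ⟨t, htA, htgt⟩ := hA.exists_gt (max T P₁)
    obtain ⟨M, hM⟩ := exists_nat_gt (2 / η)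
    obtain ⟨n, hnA, hngt⟩ := hA.exists_gt (max t M)
    have hnt : t < n := lt_of_le_of_lt (le_max_left _ _) hngt
    have hnM : M < n := lt_of_le_of_lt (le_max_right _ _) hngt
    have htP₁ : P₁ ≤ t := le_of_lt (lt_of_le_of_lt (le_max_right _ _) htgt)
    have htT : T < t := lt_of_le_of_lt (le_max_left _ _) htgt
    have htn : t ≤ n := hnt.le
    have hnN : n ≤ k n := hk.le_apply
    have hNP₁ : P₁ ≤ k n := le_trans htP₁ (le_trans htn hnN)
    have hktN : k t < k n := hk hnt
    have hktP₁ : P₁ ≤ k t := le_trans htP₁ hk.le_apply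
    have ht1 : 1 ≤ t := le_trans (le_max_right P₀ 1) htP₁
    -- abbreviations (as plain facts about explicit terms)
    have hfN : f (k n) = (g (k n) - 1) / 2 := hfA n hnA
    have hmidlt : (g (k n) - 1) / 2 < g (k n) := by have := hg3 (k n); omega
    have hcpos : 0 < w (k n) ((g (k n) - 1) / 2) := hwpos (k n) _ hmidlt
    have hseq : 2 * BSP.Sw w (k n) ((g (k n) - 1) / 2)
        + w (k n) ((g (k n) - 1) / 2) = 1 :=
      BSP.Sw_mid w hwsum hgodd hmg hwmid hwend (k n)
    have hcn : w (k n) ((g (k n) - 1) / 2) * (2 * (n : ℝ)) ≤ 1 := by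
      have hb := hcbound (k n) hNP₁
      have h2 : (n : ℝ) ≤ (k n : ℝ) := by exact_mod_cast hnN
      nlinarith
    have hnη : (2 : ℝ) / η < (n : ℝ) := lt_trans hM (by exact_mod_cast hnM)
    have hnpos : (0 : ℝ) < (n : ℝ) := lt_of_le_of_lt (by positivity) hnη
    have hc6 : 6 * w (k n) ((g (k n) - 1) / 2) ≤ 1 := by
      -- from 2/η < n, η ≤ 1 : n ≥ 3? no; use n ≥ 2/η ≥ 2 : 2n ≥ 4... need 6c ≤ 1
      have h3 : (3 : ℝ) ≤ (n : ℝ) := by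
        have : 2 / η ≥ 2 := by
          rw [ge_iff_le, le_div_iff₀ hη0]; nlinarith
        have hn3 : (2:ℝ) < n := lt_of_le_of_lt this hnη |> fun _ => lt_of_le_of_lt this hnη
        have : (2:ℕ) < n := by exact_mod_cast hn3
        exact_mod_cast this
      nlinarith
    have hcη : 4 * w (k n) ((g (k n) - 1) / 2) ≤ η := by
      rw [div_lt_iff₀ hη0] at hnη
      nlinarith
    have hLpos : 0 < BSP.Pr w f (k n) := BSP.Pr_pos w hwpos hfg (k n)
    have htpos : (0 : ℝ) < (t : ℝ) := by exact_mod_cast ht1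
    have hLle : BSP.Pr w f (k n) * (2 * (t : ℝ)) ≤ 1 := by
      have h1 : BSP.Pr w f (k n) ≤ w (k t) (f (k t)) :=
        BSP.Pr_le_single w hwpos hwsum hfg hktN
      have h2 : f (k t) = (g (k t) - 1) / 2 := hfA t htA
      have h3 := hcbound (k t) hktP₁
      rw [h2] at h1
      have h4 : (t : ℝ) ≤ (k t : ℝ) := by exact_mod_cast hk.le_apply
      have h5 := hwpos (k t) ((g (k t) - 1) / 2) (by have := hg3 (k t); omega)
      nlinarith
    have hLu : BSP.Pr w f (k n) < 2 * u := by
      have hTt : (T : ℝ) ≤ (t : ℝ) := by exact_mod_cast htT.le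
      have h1 : 1 / (4 * u) < (t : ℝ) := lt_of_lt_of_le hT hTt
      rw [div_lt_iff₀ (by positivity)] at h1
      nlinarith
    have hJ2 : x₀ ≤ BSP.Pt w f (k n) + BSP.Pr w f (k n) :=
      BSP.map_le_R w hwpos hwsum hfg (k n)
    have hI1 : BSP.Pt w f (k n)
        + BSP.Pr w f (k n) * BSP.Sw w (k n) ((g (k n) - 1) / 2) ≤ x₀ := by
      have h := BSP.Pt_le_map w hwpos hwsum hfg (k n + 1)
      rw [BSP.Pt_succ, hfN] at h
      exact h
    have hI2 : x₀ ≤ BSP.Pt w f (k n)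
        + BSP.Pr w f (k n) * BSP.Sw w (k n) ((g (k n) - 1) / 2)
        + BSP.Pr w f (k n) * w (k n) ((g (k n) - 1) / 2) := by
      have h := BSP.map_le_R w hwpos hwsum hfg (k n + 1)
      rw [BSP.Pt_succ, BSP.Pr_succ, hfN] at h
      linarith
    have htri : ∀ x ∈ B',
        (BSP.Pt w f (k n)
            + BSP.Pr w f (k n) * BSP.Sw w (k n) ((g (k n) - 1) / 2) ≤ x ∧
          x ≤ BSP.Pt w f (k n)
            + BSP.Pr w f (k n) * BSP.Sw w (k n) ((g (k n) - 1) / 2)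
            + BSP.Pr w f (k n) * w (k n) ((g (k n) - 1) / 2)) ∨
        x ≤ BSP.Pt w f (k n) ∨ BSP.Pt w f (k n) + BSP.Pr w f (k n) ≤ x := by
      rintro x ⟨f', hf'mem, rfl⟩
      have hf'g : ∀ p, f' p < g p := hf'mem.1
      have hf'A : ∀ p ∈ A, f' (k p) = (g (k p) - 1) / 2 := hf'mem.2
      rcases BSP.trichotomy w hwpos hwsum hfg hf'g (k n) with h | h | h
      · left
        have hagree : ∀ p < k n + 1, f' p = f p := by
          intro p hp
          rcases Nat.lt_succ_iff_lt_or_eq.1 hp with h' | h'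
          · exact h p h'
          · subst h'; rw [hf'A n hnA, hfA n hnA]
        constructor
        · have hle := BSP.Pt_le_map w hwpos hwsum hf'g (k n + 1)
          rwa [BSP.Pt_congr w hagree, BSP.Pt_succ, hfN] at hle
        · have hle := BSP.map_le_R w hwpos hwsum hf'g (k n + 1)
          rw [BSP.Pt_congr w hagree, BSP.Pr_congr w hagree, BSP.Pt_succ,
            BSP.Pr_succ, hfN] at hle
          linarith
      · right; left; exact h
      · right; right; exact h
    obtain ⟨ε, hεI, hεF⟩ := BSP.final_step haB hJ2 hI1 hI2 hLpos hcpos hseq hc6 hcη hLu htri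
    exact ⟨ε, hsub hεI, hεF⟩
  -- conclude limsup = 1
  have hbdd : Filter.IsBoundedUnder (· ≤ ·) l F :=
    Filter.isBoundedUnder_of_eventually_le hub
  have hkey : ∀ η : ℝ, 0 < η → η ≤ 1 → 1 - η ≤ Filter.limsup F l := fun η hη0 hη1 =>
    Filter.le_limsup_of_frequently_le (key η hη0 hη1) hbdd
  have h2 : (1 : ℝ) ≤ Filter.limsup F l := by
    by_contra hcon
    push_neg at hcon
    have hL0 : (0 : ℝ) ≤ Filter.limsup F l := by
      have := hkey 1 one_pos le_rfl; linarith
    have hη : 0 < (1 - Filter.limsup F l) / 2 := by linarith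
    have hη1 : (1 - Filter.limsup F l) / 2 ≤ 1 := by linarith
    have := hkey _ hη hη1
    linarith
  exact le_antisymm h1 h2
end

section
/- For X = ∏ₙ g(n) with g converging to infinity, if A ∈ ℐ_X (i.e., A is covered by a countable family of predictors), then the image of A in [0,1] under the canonical Cantor-expansion map is σ-strongly porous (a countable union of strongly porous sets). -/
open Set Filter

/-- An X-predictor for X = ∏ₙ g(n): an infinite set D of coordinates together
with, for each n, a guessing function depending on the first n values. -/
structure Predictor (g : ℕ → ℕ) where
  D : Set ℕ
  infinite : D.Infinite
  pred : (n : ℕ) → ((k : Fin n) → ℕ) → ℕ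
  bound : ∀ (n : ℕ) (x : (k : Fin n) → ℕ), (∀ k, x k < g k.val) → pred n x < g n

/-- π predicts f iff πₙ(f↾n) = f(n) for all but finitely many n ∈ D. -/
def Predicts {g : ℕ → ℕ} (π : Predictor g) (f : ℕ → ℕ) : Prop :=
  {n | n ∈ π.D ∧ π.pred n (fun k => f k.val) ≠ f n}.Finite

/-- The space X = ∏ₙ {0,…,g(n)−1}, as a set of functions ℕ → ℕ. -/
def Xspace (g : ℕ → ℕ) : Set (ℕ → ℕ) := {f | ∀ n, f n < g n}

/-- The ideal ℐ_X of sets covered by countably many predictors. -/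
def predIdeal (g : ℕ → ℕ) : Set (Set (ℕ → ℕ)) :=
  {A | A ⊆ Xspace g ∧
    ∃ Ps : Set (Predictor g), Ps.Countable ∧ ∀ f ∈ A, ∃ π ∈ Ps, Predicts π f}

open Set Filter

/-- The canonical Cantor-expansion map φ : X → [0,1]. -/
noncomputable def cantorMap (g : ℕ → ℕ) (f : ℕ → ℕ) : ℝ :=
  ∑' n, (f n : ℝ) / ∏ k ∈ Finset.range (n + 1), (g k : ℝ)


noncomputable def Pr (g : ℕ → ℕ) (n : ℕ) : ℝ := ∏ k ∈ Finset.range n, (g k : ℝ)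

lemma Pr_pos {g : ℕ → ℕ} (hg : ∀ n, 2 ≤ g n) (n : ℕ) : 0 < Pr g n := by
  apply Finset.prod_pos
  intro k _
  exact_mod_cast Nat.lt_of_lt_of_le Nat.zero_lt_two (hg k)

lemma Pr_succ (g : ℕ → ℕ) (n : ℕ) : Pr g (n+1) = Pr g n * g n := by
  simp [Pr, Finset.prod_range_succ]

lemma two_pow_le_Pr {g : ℕ → ℕ} (hg : ∀ n, 2 ≤ g n) (n : ℕ) : (2:ℝ)^n ≤ Pr g n := by
  induction n with
  | zero => simp [Pr]
  | succ n ih =>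
    rw [Pr_succ, pow_succ]
    have h2 : (2:ℝ) ≤ g n := by exact_mod_cast hg n
    nlinarith [Pr_pos hg n, pow_pos (by norm_num : (0:ℝ) < 2) n]

noncomputable def Sn (g : ℕ → ℕ) (f : ℕ → ℕ) (n : ℕ) : ℝ :=
  ∑ k ∈ Finset.range n, (f k : ℝ) / Pr g (k+1)

lemma term_nonneg {g : ℕ → ℕ} (hg : ∀ n, 2 ≤ g n) (f : ℕ → ℕ) (k : ℕ) :
    0 ≤ (f k : ℝ) / Pr g (k+1) :=
  div_nonneg (Nat.cast_nonneg _) (Pr_pos hg (k+1)).le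

lemma term_le {g : ℕ → ℕ} (hg : ∀ n, 2 ≤ g n) {f : ℕ → ℕ} (hf : f ∈ Xspace g) (k : ℕ) :
    (f k : ℝ) / Pr g (k+1) ≤ 1 / Pr g k - 1 / Pr g (k+1) := by
  have hk := Pr_pos hg k
  have hk1 := Pr_pos hg (k+1)
  have hfk : (f k : ℝ) ≤ (g k : ℝ) - 1 := by
    have : (f k : ℝ) + 1 ≤ g k := by exact_mod_cast hf k
    linarith
  have hgk : (0:ℝ) < g k := by
    have := hg k; positivity
  have key : 1 / Pr g k - 1 / (Pr g k * g k) = ((g k:ℝ) - 1) / (Pr g k * g k) := by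
    field_simp
  rw [Pr_succ, key]
  gcongr

lemma sum_term_le {g : ℕ → ℕ} (hg : ∀ n, 2 ≤ g n) {f : ℕ → ℕ} (hf : f ∈ Xspace g)
    (n N : ℕ) : ∑ j ∈ Finset.range N, (f (n+j) : ℝ) / Pr g (n+j+1) ≤ 1 / Pr g n := by
  have h1 : ∑ j ∈ Finset.range N, (f (n+j) : ℝ) / Pr g (n+j+1)
      ≤ ∑ j ∈ Finset.range N, (1 / Pr g (n+j) - 1 / Pr g (n+j+1)) :=
    Finset.sum_le_sum fun j _ => term_le hg hf (n+j)
  have h2 : ∑ j ∈ Finset.range N, (1 / Pr g (n+j) - 1 / Pr g (n+j+1))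
      = 1 / Pr g n - 1 / Pr g (n+N) := by
    have := Finset.sum_range_sub' (fun j => 1 / Pr g (n+j)) N
    simpa [add_assoc] using this
  have h3 : 0 < 1 / Pr g (n+N) := one_div_pos.mpr (Pr_pos hg _)
  linarith

lemma summable_term {g : ℕ → ℕ} (hg : ∀ n, 2 ≤ g n) {f : ℕ → ℕ} (hf : f ∈ Xspace g) :
    Summable (fun k => (f k : ℝ) / Pr g (k+1)) := by
  apply summable_of_sum_range_le (c := 1 / Pr g 0) (fun k => term_nonneg hg f k)
  intro N
  simpa using sum_term_le hg hf 0 N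

lemma cantorMap_eq (g : ℕ → ℕ) (f : ℕ → ℕ) :
    cantorMap g f = ∑' k, (f k : ℝ) / Pr g (k+1) := rfl

lemma Sn_le_cantorMap {g : ℕ → ℕ} (hg : ∀ n, 2 ≤ g n) {f : ℕ → ℕ} (hf : f ∈ Xspace g)
    (n : ℕ) : Sn g f n ≤ cantorMap g f := by
  rw [cantorMap_eq, ← Summable.sum_add_tsum_nat_add n (summable_term hg hf)]
  have : 0 ≤ ∑' j, (f (j + n) : ℝ) / Pr g (j + n + 1) :=
    tsum_nonneg fun j => term_nonneg hg f (j+n)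
  simpa [Sn] using this

lemma cantorMap_le_Sn {g : ℕ → ℕ} (hg : ∀ n, 2 ≤ g n) {f : ℕ → ℕ} (hf : f ∈ Xspace g)
    (n : ℕ) : cantorMap g f ≤ Sn g f n + 1 / Pr g n := by
  rw [cantorMap_eq, ← Summable.sum_add_tsum_nat_add n (summable_term hg hf)]
  have : ∑' j, (f (j + n) : ℝ) / Pr g (j + n + 1) ≤ 1 / Pr g n := by
    apply Real.tsum_le_of_sum_range_le (fun j => term_nonneg hg f (j+n))
    intro N
    have := sum_term_le hg hf n N
    convert this using 2 with j
    ring_nf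
  have hSn : ∑ k ∈ Finset.range n, (f k : ℝ) / Pr g (k+1) = Sn g f n := rfl
  linarith [this, le_refl (Sn g f n)]

/-- separation of partial sums for distinct prefixes -/
lemma Sn_sep {g : ℕ → ℕ} (hg : ∀ n, 2 ≤ g n) {f f' : ℕ → ℕ} (hf : f ∈ Xspace g)
    (hf' : f' ∈ Xspace g) :
    ∀ n, (∃ k < n, f k ≠ f' k) → 1 / Pr g n ≤ |Sn g f n - Sn g f' n| := by
  intro n
  induction n with
  | zero => rintro ⟨k, hk, _⟩; omega
  | succ n ih =>
    rintro ⟨k, hk, hne⟩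
    have hstep : Sn g f (n+1) - Sn g f' (n+1)
        = (Sn g f n - Sn g f' n) + ((f n : ℝ) - f' n) / Pr g (n+1) := by
      simp [Sn, Finset.sum_range_succ, sub_div]
      ring
    have hP := Pr_pos hg n
    have hP1 := Pr_pos hg (n+1)
    have hgn : (2:ℝ) ≤ g n := by exact_mod_cast hg n
    have hPs : Pr g (n+1) = Pr g n * g n := Pr_succ g n
    have hkey : 1 / Pr g n - ((g n : ℝ) - 1) / Pr g (n+1) = 1 / Pr g (n+1) := by
      rw [hPs]
      field_simp
      ring
    by_cases hlt : ∃ k < n, f k ≠ f' k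
    · have h1 := ih hlt
      have hb : |((f n : ℝ) - f' n)| ≤ (g n : ℝ) - 1 := by
        rw [abs_le]
        have b1 : (f n : ℝ) + 1 ≤ g n := by exact_mod_cast hf n
        have b2 : (f' n : ℝ) + 1 ≤ g n := by exact_mod_cast hf' n
        have c1 : (0:ℝ) ≤ f n := Nat.cast_nonneg _
        have c2 : (0:ℝ) ≤ f' n := Nat.cast_nonneg _
        constructor <;> linarith
      have h2 : |((f n : ℝ) - f' n) / Pr g (n+1)| ≤ ((g n : ℝ) - 1) / Pr g (n+1) := by
        rw [abs_div, abs_of_pos hP1]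
        gcongr
      have h3 : |Sn g f n - Sn g f' n| ≤ |Sn g f (n+1) - Sn g f' (n+1)|
          + |((f n : ℝ) - f' n) / Pr g (n+1)| := by
        have := abs_add_le (Sn g f (n+1) - Sn g f' (n+1)) (-(((f n : ℝ) - f' n) / Pr g (n+1)))
        rw [abs_neg] at this
        calc |Sn g f n - Sn g f' n|
            = |(Sn g f (n+1) - Sn g f' (n+1)) + (-(((f n : ℝ) - f' n) / Pr g (n+1)))| := by
              rw [hstep]; ring_nf
          _ ≤ _ := this
      linarith
    · have heq : ∀ k < n, f k = f' k := by
        intro k hk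
        by_contra hne'
        exact hlt ⟨k, hk, hne'⟩
      have hSeq : Sn g f n = Sn g f' n :=
        Finset.sum_congr rfl fun k hk => by
          rw [heq k (Finset.mem_range.mp hk)]
      have hkn : k = n := by
        rcases Nat.lt_succ_iff_lt_or_eq.mp hk with h | h
        · exact absurd (heq k h) hne
        · exact h
      subst hkn
      have hone : (1:ℝ) ≤ |((f k : ℝ) - f' k)| := by
        rcases lt_or_gt_of_ne hne with h | h
        · have : (f k : ℝ) + 1 ≤ f' k := by exact_mod_cast h
          rw [abs_sub_comm, abs_of_nonneg (by linarith)]; linarith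
        · have : (f' k : ℝ) + 1 ≤ f k := by exact_mod_cast h
          rw [abs_of_nonneg (by linarith)]; linarith
      rw [hstep, hSeq, sub_self, zero_add, abs_div, abs_of_pos hP1,
        div_le_div_iff₀ hP1 hP1] at *
      nlinarith [hone, hP1]

/-- if prefixes differ below n, φ f' avoids the open interval of f at level n -/
lemma cantorMap_notMem_Ioo {g : ℕ → ℕ} (hg : ∀ n, 2 ≤ g n) {f f' : ℕ → ℕ}
    (hf : f ∈ Xspace g) (hf' : f' ∈ Xspace g) {n : ℕ} (hd : ∃ k < n, f k ≠ f' k) :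
    cantorMap g f' ∉ Set.Ioo (Sn g f n) (Sn g f n + 1 / Pr g n) := by
  have hsep := Sn_sep hg hf hf' n hd
  have h1 := Sn_le_cantorMap hg hf' n
  have h2 := cantorMap_le_Sn hg hf' n
  rcases abs_cases (Sn g f n - Sn g f' n) with ⟨he, _⟩ | ⟨he, _⟩ <;>
    rw [he] at hsep <;> rintro ⟨hl, hr⟩ <;> linarith

/-- the piece of the image corresponding to predictor π with no errors from m on -/
def piece (g : ℕ → ℕ) (π : Predictor g) (m : ℕ) : Set ℝ :=
  cantorMap g '' {f | f ∈ Xspace g ∧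
    ∀ n, n ∈ π.D → m ≤ n → π.pred n (fun k => f k.val) = f n}

lemma lamGap_le {A : Set ℝ} {a ε : ℝ} (ha : a ∈ A) (hε : 0 < ε) :
    lamGap A (a - ε) (a + ε) ≤ ε := by
  apply Real.sSup_le _ hε.le
  rintro l ⟨hl0, c, hc1, hc2, hdisj⟩
  have : a ∉ Set.Ioo c (c + l) := fun h =>
    Set.eq_empty_iff_forall_notMem.mp hdisj a ⟨h, ha⟩
  rw [Set.mem_Ioo, not_and_or, not_lt, not_lt] at this
  rcases this with h | h <;> linarith

lemma lamGap_ge {A : Set ℝ} {a ε c l : ℝ} (hl0 : 0 ≤ l) (hc1 : a - ε ≤ c)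
    (hc2 : c + l ≤ a + ε) (hdisj : Set.Ioo c (c + l) ∩ A = ∅) :
    l ≤ lamGap A (a - ε) (a + ε) := by
  apply le_csSup
  · refine ⟨2 * ε, ?_⟩
    rintro x ⟨hx0, d, hd1, hd2, -⟩
    linarith
  · exact ⟨hl0, c, hc1, hc2, hdisj⟩

lemma lamGap_nonneg (A : Set ℝ) (a b : ℝ) : 0 ≤ lamGap A a b :=
  Real.sSup_nonneg fun _ hx => hx.1

lemma Sn_succ (g : ℕ → ℕ) (f : ℕ → ℕ) (n : ℕ) :
    Sn g f (n+1) = Sn g f n + (f n : ℝ) / Pr g (n+1) := Finset.sum_range_succ _ n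

set_option maxHeartbeats 1000000 in
/-- core geometric estimate -/
lemma piece_gap {g : ℕ → ℕ} (hg : ∀ n, 2 ≤ g n)
    (hginf : Filter.Tendsto g Filter.atTop Filter.atTop) (π : Predictor g) (m : ℕ)
    {f : ℕ → ℕ} (hfX : f ∈ Xspace g)
    (hfP : ∀ n, n ∈ π.D → m ≤ n → π.pred n (fun k => f k.val) = f n)
    {δ : ℝ} (hδ : 0 < δ) (hδ1 : δ ≤ 1) {r : ℝ} (hr : 0 < r) :
    ∃ ε, 0 < ε ∧ ε < r ∧
      1 - δ ≤ lamGap (piece g π m) (cantorMap g f - ε) (cantorMap g f + ε) / ε := by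
  set a := cantorMap g f with ha
  set B := piece g π m with hB
  -- choose K
  obtain ⟨K, hK4, hKδ⟩ : ∃ K : ℕ, 4 ≤ (K:ℝ) ∧ 2 ≤ δ * K := by
    obtain ⟨K, hK⟩ := exists_nat_ge (max 4 (2/δ))
    refine ⟨K, le_trans (le_max_left _ _) hK, ?_⟩
    have h2 : 2/δ ≤ K := le_trans (le_max_right _ _) hK
    rw [div_le_iff₀ hδ] at h2
    linarith [h2]
  obtain ⟨N₀, hN₀⟩ := Filter.eventually_atTop.mp (hginf.eventually_ge_atTop K)
  obtain ⟨N₁, hN₁⟩ : ∃ N₁ : ℕ, ((1:ℝ)/2)^N₁ < r :=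
    exists_pow_lt_of_lt_one hr (by norm_num)
  obtain ⟨n, hnD, hn⟩ := π.infinite.exists_gt (max m (max N₀ N₁))
  have hmn : m ≤ n := le_of_lt (lt_of_le_of_lt (le_max_left _ _) hn)
  have hN₀n : N₀ ≤ n := le_of_lt (lt_of_le_of_lt (le_trans (le_max_left _ _) (le_max_right _ _)) hn)
  have hN₁n : N₁ ≤ n := le_of_lt (lt_of_le_of_lt (le_trans (le_max_right _ _) (le_max_right _ _)) hn)
  -- basic quantities
  set w : ℝ := 1 / Pr g (n+1) with hw
  set W : ℝ := 1 / Pr g n with hW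
  set s : ℝ := Sn g f n with hs
  set L : ℝ := Sn g f (n+1) with hL
  have hPn := Pr_pos hg n
  have hPn1 := Pr_pos hg (n+1)
  have hwpos : 0 < w := by positivity
  have hWpos : 0 < W := by positivity
  set c : ℝ := (g n : ℝ) with hc
  set t : ℝ := (f n : ℝ) with ht
  have hcK : (K:ℝ) ≤ c := by rw [hc]; exact_mod_cast hN₀ n hN₀n
  have hc4 : 4 ≤ c := le_trans hK4 hcK
  have hδc : 2 ≤ δ * c := le_trans hKδ (by nlinarith)
  have ht0 : 0 ≤ t := Nat.cast_nonneg _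
  have htc : t + 1 ≤ c := by
    rw [ht, hc]
    have h := Nat.succ_le_of_lt (hfX n)
    exact_mod_cast h
  have hWw : W = c * w := by
    rw [hW, hw, Pr_succ]
    field_simp
    rw [eq_div_iff (ne_of_gt (by linarith)), one_mul, hc]
  have hLs : L = s + t * w := by
    rw [hL, hs, Sn_succ, hw, ht, div_eq_mul_one_div]
  have haL : L ≤ a ∧ a ≤ L + w := by
    rw [hL, ha, hw]
    exact ⟨Sn_le_cantorMap hg hfX (n+1), cantorMap_le_Sn hg hfX (n+1)⟩
  have haW : s ≤ a ∧ a ≤ s + W := by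
    rw [hs, ha, hW]
    exact ⟨Sn_le_cantorMap hg hfX n, cantorMap_le_Sn hg hfX n⟩
  have hεW : W < r := by
    have h1 : W ≤ ((1:ℝ)/2)^n := by
      rw [hW]
      rw [div_pow, one_pow, div_le_div_iff₀ hPn (by positivity), one_mul, one_mul]
      exact two_pow_le_Pr hg n
    have h2 : ((1:ℝ)/2)^n ≤ ((1:ℝ)/2)^N₁ :=
      pow_le_pow_of_le_one (by norm_num) (by norm_num) hN₁n
    linarith
  have hLW : L ≤ s + W := by rw [hLs, hWw]; nlinarith
  have hsL : s ≤ L := by rw [hLs]; nlinarith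
  -- gap disjointness
  have hnotin : ∀ b ∈ B, b ∉ Set.Ioo s L ∧ b ∉ Set.Ioo (L + w) (s + W) := by
    rintro b ⟨f', ⟨hf'X, hf'P⟩, rfl⟩
    by_cases hpre : ∀ k < n, f k = f' k
    · have hfn' : f' n = f n := by
        have he : (fun k : Fin n => f' k.val) = (fun k : Fin n => f k.val) := by
          funext k
          exact (hpre k.val k.isLt).symm
        rw [← hf'P n hnD hmn, he, hfP n hnD hmn]
      have hSeq : Sn g f' (n+1) = L := by
        rw [hL, Sn]
        apply Finset.sum_congr rfl
        intro k hk
        rcases Nat.lt_succ_iff_lt_or_eq.mp (Finset.mem_range.mp hk) with h | h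
        · rw [hpre k h]
        · subst h; rw [hfn']
      have h1 : L ≤ cantorMap g f' := by
        rw [← hSeq]; exact Sn_le_cantorMap hg hf'X (n+1)
      have h2 : cantorMap g f' ≤ L + w := by
        rw [← hSeq, hw]; exact cantorMap_le_Sn hg hf'X (n+1)
      constructor
      · rintro ⟨-, h⟩; linarith
      · rintro ⟨h, -⟩; linarith
    · push_neg at hpre
      obtain ⟨k, hk, hne⟩ := hpre
      have hnot := cantorMap_notMem_Ioo hg hfX hf'X ⟨k, hk, hne⟩
      rw [← hs, ← hW] at hnot
      constructor
      · intro hmem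
        exact hnot ⟨hmem.1, lt_of_lt_of_le hmem.2 hLW⟩
      · intro hmem
        exact hnot ⟨lt_of_le_of_lt (by linarith) hmem.1, hmem.2⟩
  have hgapL : Set.Ioo s L ∩ B = ∅ := by
    rw [Set.eq_empty_iff_forall_notMem]
    rintro b ⟨h1, h2⟩
    exact (hnotin b h2).1 h1
  have hgapR : Set.Ioo (L + w) (s + W) ∩ B = ∅ := by
    rw [Set.eq_empty_iff_forall_notMem]
    rintro b ⟨h1, h2⟩
    exact (hnotin b h2).2 h1
  clear_value a B w W s L c t
  obtain ⟨haL1, haL2⟩ := haL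
  obtain ⟨haW1, haW2⟩ := haW
  by_cases hcase : 2 * t ≤ c
  · -- right gap
    have haSW : a < s + W := by
      have hfc : t + 1 < c := by linarith
      have : L + w < s + W := by rw [hLs, hWw]; nlinarith
      linarith
    refine ⟨s + W - a, by linarith, by linarith, ?_⟩
    set ε := s + W - a with hε
    have hεpos : 0 < ε := by linarith
    have hl0 : (0:ℝ) ≤ s + W - (L + w) := by
      rw [hLs, hWw]; nlinarith
    have hgap : (s + W - (L + w)) ≤ lamGap B (a - ε) (a + ε) := by
      apply lamGap_ge (c := L + w) hl0
      · linarith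
      · linarith
      · have heq : (L + w) + (s + W - (L + w)) = s + W := by ring
        rw [heq]; exact hgapR
    rw [le_div_iff₀ hεpos]
    have hεle : ε ≤ (c - t) * w := by
      have : s + W - L = (c - t) * w := by rw [hLs, hWw]; ring
      linarith
    have h1 : 1 ≤ δ * (c - t) := by
      nlinarith [mul_nonneg hδ.le (show (0:ℝ) ≤ c - 2*t by linarith)]
    have h2 : (1 - δ) * ((c - t) * w) ≤ (c - t - 1) * w := by
      nlinarith [mul_nonneg (show (0:ℝ) ≤ δ*(c-t) - 1 by linarith) hwpos.le]
    have h3 : (1 - δ) * ε ≤ (1 - δ) * ((c - t) * w) :=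
      mul_le_mul_of_nonneg_left hεle (by linarith)
    have h4 : (c - t - 1) * w = s + W - (L + w) := by rw [hLs, hWw]; ring
    linarith
  · -- left gap
    push_neg at hcase
    have hsa : s < a := by
      have : s < L := by rw [hLs]; nlinarith
      linarith
    refine ⟨a - s, by linarith, by linarith, ?_⟩
    set ε := a - s with hε
    have hεpos : 0 < ε := by linarith
    have hl0 : (0:ℝ) ≤ L - s := by linarith
    have hgap : (L - s) ≤ lamGap B (a - ε) (a + ε) := by
      apply lamGap_ge (c := s) hl0
      · linarith
      · linarith
      · have heq : s + (L - s) = L := by ring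
        rw [heq]; exact hgapL
    rw [le_div_iff₀ hεpos]
    have hεle : ε ≤ (t + 1) * w := by
      have : L + w - s = (t + 1) * w := by rw [hLs]; ring
      linarith
    have h1 : 1 ≤ δ * (t + 1) := by
      nlinarith [mul_pos hδ (show (0:ℝ) < 2*t - c + 2 by linarith)]
    have h2 : (1 - δ) * ((t + 1) * w) ≤ t * w := by
      nlinarith [mul_nonneg (show (0:ℝ) ≤ δ*(t+1) - 1 by linarith) hwpos.le]
    have h3 : (1 - δ) * ε ≤ (1 - δ) * ((t + 1) * w) :=
      mul_le_mul_of_nonneg_left hεle (by linarith)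
    have h4 : t * w = L - s := by rw [hLs]; ring
    linarith

lemma piece_stronglyPorous {g : ℕ → ℕ} (hg : ∀ n, 2 ≤ g n)
    (hginf : Filter.Tendsto g Filter.atTop Filter.atTop) (π : Predictor g) (m : ℕ) :
    StronglyPorous (piece g π m) := by
  rintro a ⟨f, ⟨hfX, hfP⟩, rfl⟩
  set B := piece g π m with hB
  set a := cantorMap g f with ha
  have hmem : a ∈ B := ⟨f, ⟨hfX, hfP⟩, rfl⟩
  have hub : ∀ᶠ ε in nhdsWithin (0:ℝ) (Set.Ioi 0),
      lamGap B (a - ε) (a + ε) / ε ≤ 1 := by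
    filter_upwards [self_mem_nhdsWithin] with ε hε
    have hε' : (0:ℝ) < ε := hε
    rw [div_le_one hε']
    exact lamGap_le hmem hε'
  have hnn : ∀ᶠ ε in nhdsWithin (0:ℝ) (Set.Ioi 0),
      0 ≤ lamGap B (a - ε) (a + ε) / ε := by
    filter_upwards [self_mem_nhdsWithin] with ε hε
    exact div_nonneg (lamGap_nonneg _ _ _) (le_of_lt hε)
  have hbdd : Filter.IsBoundedUnder (· ≤ ·) (nhdsWithin (0:ℝ) (Set.Ioi 0))
      (fun ε => lamGap B (a - ε) (a + ε) / ε) := ⟨1, Filter.eventually_map.mpr hub⟩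
  have hcb : Filter.IsCoboundedUnder (· ≤ ·) (nhdsWithin (0:ℝ) (Set.Ioi 0))
      (fun ε => lamGap B (a - ε) (a + ε) / ε) :=
    Filter.IsCoboundedUnder.of_frequently_ge hnn.frequently
  have hle : por B a ≤ 1 := Filter.limsup_le_of_le hcb hub
  have hge : ∀ δ : ℝ, 0 < δ → δ ≤ 1 → 1 - δ ≤ por B a := by
    intro δ h1 h2
    apply Filter.le_limsup_of_frequently_le _ hbdd
    rw [Filter.frequently_iff]
    intro U hU
    obtain ⟨r, hr, hrU⟩ := Metric.mem_nhdsWithin_iff.mp hU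
    obtain ⟨ε, hε1, hε2, hε3⟩ := piece_gap hg hginf π m hfX hfP h1 h2 hr
    refine ⟨ε, hrU ⟨?_, hε1⟩, hε3⟩
    rw [Metric.mem_ball, Real.dist_eq, sub_zero, abs_of_pos hε1]
    exact hε2
  refine le_antisymm hle ?_
  by_contra hcon
  push_neg at hcon
  set p := por B a with hp
  have hδpos : 0 < min 1 ((1 - p)/2) := lt_min one_pos (by linarith)
  have h1δ := hge _ hδpos (min_le_left _ _)
  have : min 1 ((1 - p)/2) ≤ (1 - p)/2 := min_le_right _ _
  linarith

/-- if A ∈ ℐ_X then φ(A) is σ-strongly porous. -/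
theorem predIdeal_image_sigma_strongly_porous (g : ℕ → ℕ) (hg : ∀ n, 2 ≤ g n)
    (hginf : Filter.Tendsto g Filter.atTop Filter.atTop)
    (A : Set (ℕ → ℕ)) (hA : A ∈ predIdeal g) :
    ∃ F : ℕ → Set ℝ, (∀ n, StronglyPorous (F n)) ∧
      cantorMap g '' A ⊆ ⋃ n, F n := by
  obtain ⟨hAX, Ps, hPsc, hcov⟩ := hA
  rcases Ps.eq_empty_or_nonempty with h | h
  · refine ⟨fun _ => ∅, fun n x hx => absurd hx (Set.notMem_empty x), ?_⟩
    rintro x ⟨f, hf, rfl⟩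
    obtain ⟨π, hπ, -⟩ := hcov f hf
    rw [h] at hπ
    exact absurd hπ (Set.notMem_empty π)
  · obtain ⟨e, he⟩ := Set.Countable.exists_eq_range hPsc h
    refine ⟨fun k => piece g (e (Nat.unpair k).1) (Nat.unpair k).2,
      fun k => piece_stronglyPorous hg hginf _ _, ?_⟩
    rintro x ⟨f, hf, rfl⟩
    obtain ⟨π, hπ, hpred⟩ := hcov f hf
    rw [he] at hπ
    obtain ⟨i, rfl⟩ := hπ
    obtain ⟨m, hm⟩ := (hpred.bddAbove : BddAbove _)
    refine Set.mem_iUnion.mpr ⟨Nat.pair i (m+1), ?_⟩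
    have hup : Nat.unpair (Nat.pair i (m+1)) = (i, m+1) := Nat.unpair_pair i (m+1)
    rw [hup]
    refine ⟨f, ⟨hAX hf, ?_⟩, rfl⟩
    intro n hnD hmn
    by_contra hne
    have : n ≤ m := hm ⟨hnD, hne⟩
    omega
end

section
/- The set of f ∈ X predicted by a single X-predictor π, when g converges to infinity, maps under the Cantor expansion to a strongly porous subset of [0,1]. -/
open Set Filter

open Set Filter

namespace PorAux

noncomputable def Pg (g : ℕ → ℕ) (n : ℕ) : ℝ := ∏ k ∈ Finset.range n, (g k : ℝ)

variable {g : ℕ → ℕ}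

lemma Pg_pos (hg : ∀ n, 2 ≤ g n) (n : ℕ) : 0 < Pg g n :=
  Finset.prod_pos fun k _ => by
    have := hg k; positivity

lemma Pg_succ (g : ℕ → ℕ) (n : ℕ) : Pg g (n + 1) = Pg g n * g n :=
  Finset.prod_range_succ _ _

lemma Pg_ge (hg : ∀ n, 2 ≤ g n) (n : ℕ) : (2 : ℝ) ^ n ≤ Pg g n := by
  induction n with
  | zero => simp [Pg]
  | succ n ih =>
      rw [Pg_succ, pow_succ]
      have h2 : (2 : ℝ) ≤ g n := by exact_mod_cast hg n
      have := Pg_pos hg n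
      nlinarith [pow_pos (show (0:ℝ) < 2 by norm_num) n]

lemma one_div_Pg_le (hg : ∀ n, 2 ≤ g n) (n : ℕ) : 1 / Pg g n ≤ (1 / 2) ^ n := by
  have h1 := Pg_ge hg n
  have h2 : (0:ℝ) < 2 ^ n := by positivity
  have h3 := Pg_pos hg n
  rw [div_pow, one_pow, div_le_div_iff₀ h3 h2, one_mul, one_mul]
  exact h1

lemma fle {f : ℕ → ℕ} (hf : ∀ k, f k < g k) (k : ℕ) : (f k : ℝ) ≤ (g k : ℝ) - 1 := by
  have := hf k
  have : (f k : ℝ) + 1 ≤ g k := by exact_mod_cast this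
  linarith

lemma term_le (hg : ∀ n, 2 ≤ g n) {f : ℕ → ℕ} (hf : ∀ k, f k < g k) (k : ℕ) :
    (f k : ℝ) / Pg g (k + 1) ≤ 1 / Pg g k - 1 / Pg g (k + 1) := by
  have hp := Pg_pos hg k
  have hp1 := Pg_pos hg (k + 1)
  have hgk : (0:ℝ) < g k := by have := hg k; positivity
  have h1 : (f k : ℝ) / Pg g (k+1) ≤ ((g k : ℝ) - 1) / Pg g (k+1) :=
    div_le_div_of_nonneg_right (fle hf k) hp1.le
  refine h1.trans_eq ?_
  rw [Pg_succ]
  field_simp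

lemma summable_cantor (hg : ∀ n, 2 ≤ g n) {f : ℕ → ℕ} (hf : ∀ k, f k < g k) :
    Summable (fun n => (f n : ℝ) / Pg g (n + 1)) := by
  apply Summable.of_nonneg_of_le (fun n => by have := Pg_pos hg (n+1); positivity)
    (fun n => ?_) (summable_geometric_of_lt_one (by norm_num) (by norm_num : (1/2:ℝ) < 1))
  have hp1 := Pg_pos hg (n + 1)
  have h1 : (f n : ℝ) / Pg g (n+1) ≤ (g n : ℝ) / Pg g (n+1) := by
    apply div_le_div_of_nonneg_right ?_ hp1.le
    exact_mod_cast (hf n).le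
  have h2 : (g n : ℝ) / Pg g (n+1) = 1 / Pg g n := by
    have := Pg_pos hg n
    have hgk : (0:ℝ) < g n := by have := hg n; positivity
    rw [Pg_succ]; field_simp
  calc (f n : ℝ) / Pg g (n+1) ≤ 1 / Pg g n := by rw [← h2]; exact h1
    _ ≤ (1/2)^n := one_div_Pg_le hg n

lemma cantorMap_eq (g : ℕ → ℕ) (f : ℕ → ℕ) :
    cantorMap g f = ∑' n, (f n : ℝ) / Pg g (n + 1) := rfl

lemma tail_nonneg (hg : ∀ n, 2 ≤ g n) (f : ℕ → ℕ) (n : ℕ) :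
    0 ≤ ∑' k, (f (k + n) : ℝ) / Pg g (k + n + 1) :=
  tsum_nonneg fun k => by have := Pg_pos hg (k + n + 1); positivity

lemma tail_le (hg : ∀ n, 2 ≤ g n) {f : ℕ → ℕ} (hf : ∀ k, f k < g k) (n : ℕ) :
    ∑' k, (f (k + n) : ℝ) / Pg g (k + n + 1) ≤ 1 / Pg g n := by
  apply Real.tsum_le_of_sum_range_le
    (fun k => by have := Pg_pos hg (k + n + 1); positivity)
  intro K
  have hidx : ∀ i : ℕ, i + 1 + n = i + n + 1 := fun i => by omega
  have htel := Finset.sum_range_sub' (f := fun j => (1:ℝ) / Pg g (j + n)) K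
  simp only [hidx, Nat.zero_add] at htel
  calc ∑ k ∈ Finset.range K, (f (k + n) : ℝ) / Pg g (k + n + 1)
      ≤ ∑ k ∈ Finset.range K, (1 / Pg g (k + n) - 1 / Pg g (k + n + 1)) :=
        Finset.sum_le_sum fun k _ => term_le hg hf (k + n)
    _ = 1 / Pg g n - 1 / Pg g (K + n) := htel
    _ ≤ 1 / Pg g n := by
        have := Pg_pos hg (K + n)
        have : (0:ℝ) ≤ 1 / Pg g (K + n) := by positivity
        linarith

lemma decomp (hg : ∀ n, 2 ≤ g n) {f : ℕ → ℕ} (hf : ∀ k, f k < g k) (n : ℕ) :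
    cantorMap g f = (∑ k ∈ Finset.range n, (f k : ℝ) / Pg g (k + 1))
      + ∑' k, (f (k + n) : ℝ) / Pg g (k + n + 1) := by
  rw [cantorMap_eq]
  exact (Summable.sum_add_tsum_nat_add n (summable_cantor hg hf)).symm

lemma Ico_telescope (hg : ∀ n, 2 ≤ g n) {j n : ℕ} (hjn : j ≤ n) :
    ∑ k ∈ Finset.Ico j n, (1 / Pg g k - 1 / Pg g (k + 1)) = 1 / Pg g j - 1 / Pg g n := by
  have h1 := Finset.sum_range_add_sum_Ico
    (f := fun k => (1:ℝ) / Pg g k - 1 / Pg g (k + 1)) hjn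
  have h2 := Finset.sum_range_sub' (f := fun k => (1:ℝ) / Pg g k) n
  have h3 := Finset.sum_range_sub' (f := fun k => (1:ℝ) / Pg g k) j
  have h0 : Pg g 0 = 1 := by simp [Pg]
  simp only [h0] at h2 h3
  linarith

lemma sep (hg : ∀ n, 2 ≤ g n) {f h : ℕ → ℕ} (hfX : ∀ k, f k < g k) (hhX : ∀ k, h k < g k)
    {n j : ℕ} (hjn : j < n) (hne : h j ≠ f j) (hmin : ∀ k, k < j → h k = f k) :
    cantorMap g h ≤ (∑ k ∈ Finset.range n, (f k : ℝ) / Pg g (k + 1)) ∨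
      (∑ k ∈ Finset.range n, (f k : ℝ) / Pg g (k + 1)) + 1 / Pg g n ≤ cantorMap g h := by
  have hP := Pg_pos hg (j + 1)
  have hPn := Pg_pos hg n
  -- decomposition of h at j+1
  have hdec := decomp hg hhX (j + 1)
  set T := ∑' k, (h (k + (j + 1)) : ℝ) / Pg g (k + (j + 1) + 1) with hT
  have hT0 : 0 ≤ T := tail_nonneg hg h (j + 1)
  have hT1 : T ≤ 1 / Pg g (j + 1) := tail_le hg hhX (j + 1)
  have hpre : ∑ k ∈ Finset.range j, (h k : ℝ) / Pg g (k + 1)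
      = ∑ k ∈ Finset.range j, (f k : ℝ) / Pg g (k + 1) :=
    Finset.sum_congr rfl fun k hk => by rw [hmin k (Finset.mem_range.mp hk)]
  set pre := ∑ k ∈ Finset.range j, (f k : ℝ) / Pg g (k + 1) with hpredef
  have hφh : cantorMap g h = pre + (h j : ℝ) / Pg g (j + 1) + T := by
    rw [hdec, Finset.sum_range_succ, hpre]
  -- split c
  have hcsplit : ∑ k ∈ Finset.range n, (f k : ℝ) / Pg g (k + 1)
      = pre + ((f j : ℝ) / Pg g (j + 1)
        + ∑ k ∈ Finset.Ico (j + 1) n, (f k : ℝ) / Pg g (k + 1)) := by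
    rw [hpredef, ← Finset.sum_range_add_sum_Ico _ hjn.le,
      Finset.sum_eq_sum_Ico_succ_bot hjn]
  set Sj := ∑ k ∈ Finset.Ico (j + 1) n, (f k : ℝ) / Pg g (k + 1) with hSj
  have hSj0 : 0 ≤ Sj := Finset.sum_nonneg fun k _ => by
    have := Pg_pos hg (k + 1); positivity
  have hSj1 : Sj ≤ 1 / Pg g (j + 1) - 1 / Pg g n := by
    calc Sj ≤ ∑ k ∈ Finset.Ico (j + 1) n, (1 / Pg g k - 1 / Pg g (k + 1)) :=
          Finset.sum_le_sum fun k _ => term_le hg hfX k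
      _ = 1 / Pg g (j + 1) - 1 / Pg g n := Ico_telescope hg hjn
  rcases lt_or_gt_of_ne hne with hlt | hgt
  · left
    have hcast : (h j : ℝ) + 1 ≤ f j := by exact_mod_cast hlt
    have e1 : (h j : ℝ) / Pg g (j + 1) + 1 / Pg g (j + 1) ≤ (f j : ℝ) / Pg g (j + 1) := by
      rw [← add_div, div_le_div_iff₀ hP hP]
      nlinarith
    rw [hφh, hcsplit]
    linarith
  · right
    have hcast : (f j : ℝ) + 1 ≤ h j := by exact_mod_cast hgt
    have e2 : (f j : ℝ) / Pg g (j + 1) + 1 / Pg g (j + 1) ≤ (h j : ℝ) / Pg g (j + 1) := by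
      rw [← add_div, div_le_div_iff₀ hP hP]
      nlinarith
    rw [hφh, hcsplit]
    linarith

lemma le_lamGap {A : Set ℝ} {a b l c : ℝ} (hl : 0 ≤ l) (hac : a ≤ c) (hcb : c + l ≤ b)
    (hdisj : Set.Ioo c (c + l) ∩ A = ∅) : l ≤ lamGap A a b := by
  apply le_csSup
  · refine ⟨b - a, ?_⟩
    rintro x ⟨hx0, d, had, hdb, -⟩
    linarith
  · exact ⟨hl, c, hac, hcb, hdisj⟩

lemma lamGap_nonneg (A : Set ℝ) {a b : ℝ} (hab : a ≤ b) : 0 ≤ lamGap A a b :=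
  le_lamGap le_rfl le_rfl (by linarith) (by simp)

lemma lamGap_le_of_mem {A : Set ℝ} {a : ℝ} (ha : a ∈ A) {ε : ℝ} (hε : 0 ≤ ε) :
    lamGap A (a - ε) (a + ε) ≤ ε := by
  apply csSup_le
  · exact ⟨0, le_rfl, a - ε, le_rfl, by linarith, by simp⟩
  · rintro l ⟨hl0, c, hac, hcl, hdisj⟩
    by_cases hca : a ≤ c
    · linarith
    · have hx : ¬(c < a ∧ a < c + l) := fun ⟨h1, h2⟩ =>
        (Set.eq_empty_iff_forall_notMem.mp hdisj a) ⟨⟨h1, h2⟩, ha⟩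
      push_neg at hx
      have := hx (lt_of_not_ge hca)
      linarith

end PorAux

set_option maxHeartbeats 2000000 in
/-- the set of f predicted by π from stage m onwards maps to a
strongly porous subset of [0,1]. -/
theorem predicted_set_image_strongly_porous (g : ℕ → ℕ) (hg : ∀ n, 2 ≤ g n)
    (hginf : Filter.Tendsto g Filter.atTop Filter.atTop)
    (π : Predictor g) (m : ℕ) :
    StronglyPorous (cantorMap g ''
      {f | f ∈ Xspace g ∧
        ∀ n ∈ π.D, m ≤ n → π.pred n (fun k => f k.val) = f n}) := by
  classical
  open PorAux in
  intro a ha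
  obtain ⟨f, hfS, hfa⟩ := ha
  obtain ⟨hfX', hfpred⟩ := hfS
  have hfX : ∀ k, f k < g k := hfX'
  subst hfa
  set A : Set ℝ := (cantorMap g ''
      {f | f ∈ Xspace g ∧
        ∀ n ∈ π.D, m ≤ n → π.pred n (fun k => f k.val) = f n}) with hA
  have hmemA : cantorMap g f ∈ A := by
    rw [hA]; exact ⟨f, ⟨hfX', hfpred⟩, rfl⟩
  simp only [por]
  set u : ℝ → ℝ := fun ε => lamGap A (cantorMap g f - ε) (cantorMap g f + ε) / ε with hu
  have hub : ∀ᶠ ε in nhdsWithin (0:ℝ) (Set.Ioi 0), u ε ≤ 1 := by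
    filter_upwards [self_mem_nhdsWithin] with ε hε
    have hε0 : (0:ℝ) < ε := hε
    show lamGap A (cantorMap g f - ε) (cantorMap g f + ε) / ε ≤ 1
    rw [div_le_one hε0]
    exact PorAux.lamGap_le_of_mem hmemA hε0.le
  have hlb0 : ∀ᶠ ε in nhdsWithin (0:ℝ) (Set.Ioi 0), 0 ≤ u ε := by
    filter_upwards [self_mem_nhdsWithin] with ε hε
    have hε0 : (0:ℝ) < ε := hε
    exact div_nonneg (PorAux.lamGap_nonneg A (by linarith)) hε0.le
  have hbdd : IsBoundedUnder (· ≤ ·) (nhdsWithin (0:ℝ) (Set.Ioi 0)) u :=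
    ⟨1, by rwa [eventually_map]⟩
  have hcob : IsCoboundedUnder (· ≤ ·) (nhdsWithin (0:ℝ) (Set.Ioi 0)) u :=
    Filter.IsCoboundedUnder.of_frequently_ge hlb0.frequently
  have hfreq : ∀ δ : ℝ, 0 < δ →
      ∃ᶠ ε in nhdsWithin (0:ℝ) (Set.Ioi 0), 1 - δ ≤ u ε := by
    intro δ hδ
    rw [frequently_iff]
    intro U hU
    obtain ⟨η, hη, hsub⟩ := mem_nhdsGT_iff_exists_Ioo_subset.mp hU
    have hη0 : (0:ℝ) < η := hη
    obtain ⟨N₁, hN₁⟩ := Filter.eventually_atTop.mp (hginf.eventually_ge_atTop (⌈2/δ⌉₊ + 2))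
    obtain ⟨N₂, hN₂⟩ := exists_pow_lt_of_lt_one hη0 (by norm_num : (1/2:ℝ) < 1)
    obtain ⟨n, hnD, hn⟩ := π.infinite.exists_gt (max (max m N₁) N₂)
    have hmn : m ≤ n := le_trans ((le_max_left m N₁).trans (le_max_left _ N₂)) hn.le
    have hN₁n : N₁ ≤ n := le_trans ((le_max_right m N₁).trans (le_max_left _ N₂)) hn.le
    have hN₂n : N₂ ≤ n := (le_max_right _ N₂).trans hn.le
    have hgn : 2/δ + 1 ≤ (g n : ℝ) := by
      have h1 : ⌈2/δ⌉₊ + 2 ≤ g n := hN₁ n hN₁n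
      have h2 : (2/δ : ℝ) ≤ ⌈2/δ⌉₊ := Nat.le_ceil _
      have h3 : ((⌈2/δ⌉₊ + 2 : ℕ) : ℝ) ≤ g n := by exact_mod_cast h1
      push_cast at h3
      linarith
    have hPn := PorAux.Pg_pos hg n
    have hP1 := PorAux.Pg_pos hg (n+1)
    set w : ℝ := 1 / PorAux.Pg g (n+1) with hw_def
    set L : ℝ := 1 / PorAux.Pg g n with hL_def
    have hw0 : 0 < w := by rw [hw_def]; positivity
    have hL0 : 0 < L := by rw [hL_def]; positivity
    have hgn0 : (0:ℝ) < g n := by have := hg n; positivity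
    have hLw : L = (g n : ℝ) * w := by
      rw [hL_def, hw_def, PorAux.Pg_succ]
      field_simp
    have hLη : L < η := by
      rw [hL_def]
      calc 1 / PorAux.Pg g n ≤ (1/2)^n := PorAux.one_div_Pg_le hg n
        _ ≤ (1/2)^N₂ := pow_le_pow_of_le_one (by norm_num) (by norm_num) hN₂n
        _ < η := hN₂
    set c : ℝ := ∑ k ∈ Finset.range n, (f k : ℝ) / PorAux.Pg g (k+1) with hc_def
    set s : ℝ := c + (f n : ℝ) / PorAux.Pg g (n+1) with hs_def
    have hfnw : (f n : ℝ) / PorAux.Pg g (n+1) = (f n : ℝ) * w := by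
      rw [hw_def]; ring
    have hsum : ∑ k ∈ Finset.range (n+1), (f k : ℝ) / PorAux.Pg g (k+1) = s := by
      rw [Finset.sum_range_succ, ← hc_def, ← hs_def]
    have hdec := PorAux.decomp hg hfX (n+1)
    have hT0 := PorAux.tail_nonneg hg f (n+1)
    have hT1 := PorAux.tail_le hg hfX (n+1)
    rw [← hw_def] at hT1
    have has1 : s ≤ cantorMap g f := by rw [hdec, hsum]; linarith
    have has2 : cantorMap g f ≤ s + w := by rw [hdec, hsum]; linarith
    have hfn1 : (f n : ℝ) + 1 ≤ g n := by exact_mod_cast hfX n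
    have hfn0 : (0:ℝ) ≤ f n := Nat.cast_nonneg _
    have hcs : c ≤ s := by
      rw [hs_def]
      have h0 : (0:ℝ) ≤ (f n : ℝ) / PorAux.Pg g (n+1) := by positivity
      linarith
    have hswL : s + w ≤ c + L := by
      rw [hs_def, hfnw, hLw]; nlinarith
    have hcLa : cantorMap g f ≤ c + L := le_trans has2 hswL
    have hAloc : ∀ y ∈ A, (s ≤ y ∧ y ≤ s + w) ∨ y ≤ c ∨ c + L ≤ y := by
      intro y hy
      rw [hA] at hy
      obtain ⟨h, hhS, rfl⟩ := hy
      obtain ⟨hhX', hhpred⟩ := hhS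
      have hhX : ∀ k, h k < g k := hhX'
      by_cases hag : ∀ k, k < n → h k = f k
      · left
        have hEq : (fun k : Fin n => h k.val) = (fun k : Fin n => f k.val) :=
          funext fun k => hag k.val k.isLt
        have hn' : h n = f n := by
          have h1 := hhpred n hnD hmn
          have h2 := hfpred n hnD hmn
          rw [← h1, hEq, h2]
        have hsum' : ∑ k ∈ Finset.range (n+1), (h k : ℝ) / PorAux.Pg g (k+1) = s := by
          rw [← hsum]
          refine Finset.sum_congr rfl fun k hk => ?_
          rcases Nat.lt_succ_iff_lt_or_eq.mp (Finset.mem_range.mp hk) with hlt | heq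
          · rw [hag k hlt]
          · subst heq; rw [hn']
        have hdech := PorAux.decomp hg hhX (n+1)
        have hTh0 := PorAux.tail_nonneg hg h (n+1)
        have hTh1 := PorAux.tail_le hg hhX (n+1)
        rw [← hw_def] at hTh1
        constructor
        · rw [hdech, hsum']; linarith
        · rw [hdech, hsum']; linarith
      · right
        push_neg at hag
        obtain ⟨j₀, hj₀n, hj₀⟩ := hag
        have hex : ∃ j, h j ≠ f j := ⟨j₀, hj₀⟩
        have hj := Nat.find_spec hex
        have hjn : Nat.find hex < n := lt_of_le_of_lt (Nat.find_min' hex hj₀) hj₀n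
        have hmin : ∀ k, k < Nat.find hex → h k = f k := fun k hk =>
          not_not.mp (Nat.find_min hex hk)
        have hsep := PorAux.sep hg hfX hhX hjn hj hmin
        rw [← hc_def, ← hL_def] at hsep
        exact hsep
    have h2gn : (2:ℝ) ≤ g n := by exact_mod_cast hg n
    have hkey : ∃ ε l : ℝ, 0 < ε ∧ ε < η ∧ ε ≤ l + w ∧
        ((g n : ℝ) - 1)/2 * w ≤ l ∧ 0 < l ∧
        l ≤ lamGap A (cantorMap g f - ε) (cantorMap g f + ε) := by
      by_cases hcase : 2 * f n + 1 ≤ g n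
      · -- right gap
        have hfn2 : 2 * (f n : ℝ) + 1 ≤ g n := by exact_mod_cast hcase
        have hl_eq : c + L - (s + w) = ((g n : ℝ) - 1 - f n) * w := by
          rw [hs_def, hfnw, hLw]; ring
        have hlge : ((g n : ℝ) - 1)/2 * w ≤ c + L - (s + w) := by
          rw [hl_eq]; nlinarith
        have hl0 : 0 < c + L - (s + w) := by rw [hl_eq]; nlinarith
        refine ⟨c + L - cantorMap g f, c + L - (s + w), ?_, ?_, ?_, hlge, hl0, ?_⟩
        · linarith
        · have : c + L - cantorMap g f ≤ L := by linarith
          linarith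
        · linarith
        · apply PorAux.le_lamGap (c := s + w) hl0.le
          · linarith
          · linarith
          · apply Set.eq_empty_iff_forall_notMem.mpr
            rintro y ⟨⟨hy1, hy2⟩, hyA⟩
            rcases hAloc y hyA with ⟨h1, h2⟩ | h2 | h2 <;> linarith
      · -- left gap
        have hfn2 : (g n : ℝ) ≤ 2 * (f n : ℝ) := by
          exact_mod_cast Nat.lt_succ_iff.mp (Nat.not_le.mp hcase)
        have hsc : s - c = (f n : ℝ) * w := by rw [hs_def, hfnw]; ring
        have hlge : ((g n : ℝ) - 1)/2 * w ≤ s - c := by rw [hsc]; nlinarith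
        have hl0 : 0 < s - c := by nlinarith
        refine ⟨cantorMap g f - c, s - c, ?_, ?_, ?_, hlge, hl0, ?_⟩
        · linarith
        · have : cantorMap g f - c ≤ L := by linarith
          linarith
        · linarith
        · apply PorAux.le_lamGap (c := c) hl0.le
          · linarith
          · linarith
          · apply Set.eq_empty_iff_forall_notMem.mpr
            rintro y ⟨⟨hy1, hy2⟩, hyA⟩
            rcases hAloc y hyA with ⟨h1, h2⟩ | h2 | h2 <;> linarith
    obtain ⟨ε, l, hε0, hεη, hεl, hlge, hl0, hgap⟩ := hkey
    refine ⟨ε, hsub ⟨hε0, hεη⟩, ?_⟩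
    show 1 - δ ≤ lamGap A (cantorMap g f - ε) (cantorMap g f + ε) / ε
    have hδl : w ≤ δ * l := by
      have h1 : 2 ≤ ((g n:ℝ) - 1) * δ := (div_le_iff₀ hδ).mp (by linarith)
      nlinarith [mul_le_mul_of_nonneg_left hlge hδ.le, mul_le_mul_of_nonneg_right h1 hw0.le]
    have hstep : (1 - δ) * ε ≤ l := by
      rcases le_or_gt 1 δ with h1δ | h1δ
      · have h2 := mul_nonneg (sub_nonneg.mpr h1δ) hε0.le
        nlinarith
      · have h2 : ε ≤ (1 + δ) * l := by nlinarith
        have h3 := mul_le_mul_of_nonneg_left h2 (by linarith : (0:ℝ) ≤ 1 - δ)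
        nlinarith [mul_nonneg (mul_self_nonneg δ) hl0.le]
    calc 1 - δ ≤ l / ε := by rw [le_div_iff₀ hε0]; exact hstep
      _ ≤ lamGap A (cantorMap g f - ε) (cantorMap g f + ε) / ε :=
          div_le_div_of_nonneg_right hgap hε0.le
  apply le_antisymm
  · exact Filter.limsup_le_of_le hcob hub
  · by_contra hcon
    push_neg at hcon
    have h1 : 1 - (1 - Filter.limsup u (nhdsWithin (0:ℝ) (Set.Ioi 0)))/2 ≤
        Filter.limsup u (nhdsWithin (0:ℝ) (Set.Ioi 0)) :=
      Filter.le_limsup_of_frequently_le (hfreq _ (by linarith)) hbdd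
    linarith
end
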